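/- For every x ∈ b^ω and every filtering (U_s)_{s ∈ b^{<ω}} on b^ω, there exists a unique branch y ∈ b^ω such that x ∈ U_{y|n} for every n < ω, and the map sending x to this branch y is a continuous nondecreasing surjection of b^ω. -/

import Mathlib

noncomputable section
open Classical

/-- Lexicographic strict order on `ℕ → Fin b`. -/
def lexLT (b : ℕ) (x y : ℕ → Fin b) : Prop :=
  ∃ n, (∀ m, m < n → x m = y m) ∧ x n < y n

/-- Lexicographic order `≤_lex` on `ℕ → Fin b`. -/
def lexLE (b : ℕ) (x y : ℕ → Fin b) : Prop := x = y ∨ lexLT b x y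

def IsGreatestLex (b : ℕ) (S : Set (ℕ → Fin b)) (x : ℕ → Fin b) : Prop :=
  x ∈ S ∧ ∀ y ∈ S, lexLE b y x

def IsLeastLex (b : ℕ) (S : Set (ℕ → Fin b)) (x : ℕ → Fin b) : Prop :=
  x ∈ S ∧ ∀ y ∈ S, lexLE b x y

/-- `S` is an interval for the lexicographic order. -/
def LexInterval (b : ℕ) (S : Set (ℕ → Fin b)) : Prop :=
  ∀ x ∈ S, ∀ y ∈ S, ∀ z, lexLE b x z → lexLE b z y → z ∈ S

/-- The basic clopen set of sequences extending the finite sequence `s`. -/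
def W (b : ℕ) (s : List (Fin b)) : Set (ℕ → Fin b) :=
  {x | ∀ i, (hi : i < s.length) → x i = s.get ⟨i, hi⟩}

/-- Continuous nondecreasing surjections of `b^ω`, i.e. members of `C↑_sur(b^ω)`. -/
def CSur (b : ℕ) (f : (ℕ → Fin b) → (ℕ → Fin b)) : Prop :=
  Continuous f ∧ Function.Surjective f ∧ ∀ x y, lexLE b x y → lexLE b (f x) (f y)

/-- A filtering on `b^ω`. -/
def Filtering (b : ℕ) (U : List (Fin b) → Set (ℕ → Fin b)) : Prop :=
  (∀ s, (U s).Nonempty ∧ IsClopen (U s) ∧ LexInterval b (U s)) ∧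
  U [] = Set.univ ∧
  (∀ s, U s = ⋃ i : Fin b, U (s ++ [i])) ∧
  (∀ s, ∀ i j : Fin b, i ≠ j → Disjoint (U (s ++ [i])) (U (s ++ [j]))) ∧
  (∀ s, ∀ i j : Fin b, i < j → ∀ x y,
    IsGreatestLex b (U (s ++ [i])) x → IsGreatestLex b (U (s ++ [j])) y → lexLT b x y)

/-- `A_b`: sequences eventually equal to `b-1` (the top of `Fin b`), except the constant
top sequence (the lexicographic maximum of `b^ω`). -/
def AbSet (b : ℕ) : Set (ℕ → Fin b) :=
  {x | (∃ N, ∀ n, N ≤ n → ∀ j : Fin b, j ≤ x n) ∧ ¬ ∀ n, ∀ j : Fin b, j ≤ x n}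

/-- `Y` is order isomorphic to `ℚ` with respect to the lexicographic order. -/
def OrderIsoQ (b : ℕ) (Y : Set (ℕ → Fin b)) : Prop :=
  ∃ e : ℚ ≃ Y, ∀ p q : ℚ, p ≤ q ↔ lexLE b (e p).1 (e q).1

/-- `Y_f = {max f⁻¹(W_s) : s ∈ b^{<ω}} \ {max b^ω}`. -/
def Yset (b : ℕ) (f : (ℕ → Fin b) → (ℕ → Fin b)) : Set (ℕ → Fin b) :=
  {x | (∃ s : List (Fin b), IsGreatestLex b (f ⁻¹' W b s) x) ∧ ¬ ∀ n, ∀ j : Fin b, j ≤ x n}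

/-- The metric `ρ_b` on `b^ω`. -/
def rhoB (b : ℕ) (x y : ℕ → Fin b) : ℝ :=
  if h : x = y then 0 else (2 : ℝ) ^ (-(Nat.find (Function.ne_iff.mp h) : ℤ))

/-- The sup-metric `ρ_∞` on `C↑_sur(b^ω)`. -/
def rhoInf (b : ℕ) (f g : (ℕ → Fin b) → (ℕ → Fin b)) : ℝ :=
  ⨆ x, rhoB b (f x) (g x)

/-- `⌊log₂(1/ε)⌋ + 1`. -/
def kOf (ε : ℝ) : ℕ := ⌊Real.logb 2 (1 / ε)⌋₊ + 1

/-- The `l`-th odd tangent number `t_l = tan^{(2l-1)}(0)`. -/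
def oddTangent (l : ℕ) : ℝ := iteratedDeriv (2 * l - 1) Real.tan 0

/-- The lexicographically increasing enumeration of `b^k`: `sEnum b k hb i` is the
`i`-th element of `b^k` in lexicographic order (base-`b` digits, most significant first). -/
def sEnum (b k : ℕ) (hb : 0 < b) (i : ℕ) : List (Fin b) :=
  List.ofFn fun j : Fin k => (⟨i / b ^ (k - 1 - (j : ℕ)) % b, Nat.mod_lt _ hb⟩ : Fin b)

end

section Aux
open Classical List
attribute [local instance] Classical.propDecidable
variable {b : ℕ}

lemma lexLT_trans {x y z : ℕ → Fin b} (h1 : lexLT b x y) (h2 : lexLT b y z) :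
    lexLT b x z := by
  obtain ⟨n, hxy, hn⟩ := h1
  obtain ⟨m, hyz, hm⟩ := h2
  rcases lt_trichotomy n m with h | h | h
  · exact ⟨n, fun k hk => (hxy k hk).trans (hyz k (hk.trans h)), (hyz n h) ▸ hn⟩
  · subst h; exact ⟨n, fun k hk => (hxy k hk).trans (hyz k hk), hn.trans hm⟩
  · exact ⟨m, fun k hk => (hxy k (hk.trans h)).trans (hyz k hk), (hxy m h) ▸ hm⟩

lemma lexLT_irrefl {x : ℕ → Fin b} : ¬ lexLT b x x := by
  rintro ⟨n, -, hn⟩; exact lt_irrefl _ hn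

lemma lexLE_trans {x y z : ℕ → Fin b} (h1 : lexLE b x y) (h2 : lexLE b y z) :
    lexLE b x z := by
  rcases h1 with rfl | h1
  · exact h2
  rcases h2 with rfl | h2
  · exact Or.inr h1
  exact Or.inr (lexLT_trans h1 h2)

lemma mem_W_ofFn {n : ℕ} {g : Fin n → Fin b} {x : ℕ → Fin b} :
    x ∈ W b (List.ofFn g) ↔ ∀ i : Fin n, x i = g i := by
  constructor
  · intro h i
    have := h i (by simpa using i.isLt)
    simpa using this
  · intro h i hi
    have hi' : i < n := by simpa using hi
    have := h ⟨i, hi'⟩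
    simpa using this

lemma ofFn_snoc' {n : ℕ} (g : Fin n → Fin b) (j : Fin b) :
    List.ofFn (Fin.snoc g j : Fin (n+1) → Fin b) = List.ofFn g ++ [j] := by
  rw [List.ofFn_succ']
  simp [Fin.snoc_castSucc, Fin.snoc_last, List.concat_eq_append]

lemma mem_W_append {L : List (Fin b)} {j : Fin b} {x : ℕ → Fin b} :
    x ∈ W b (L ++ [j]) ↔ x ∈ W b L ∧ x L.length = j := by
  constructor
  · intro h
    refine ⟨fun i hi => ?_, ?_⟩
    · have := h i (by simp; omega)
      simpa [List.getElem_append, hi] using this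
    · have := h L.length (by simp)
      simpa using this
  · rintro ⟨h1, h2⟩ i hi
    simp only [List.length_append, List.length_singleton] at hi
    rcases lt_or_eq_of_le (Nat.lt_succ_iff.mp hi) with hlt | heq
    · have := h1 i hlt
      simp only [List.get_eq_getElem, List.getElem_append, hlt] at this ⊢
      simpa [hlt] using this
    · subst heq
      simpa using h2

/-- iterate a picker -/
def iterList (p : List (Fin b) → Fin b) : ℕ → List (Fin b)
  | 0 => []
  | n+1 => iterList p n ++ [p (iterList p n)]

def iterSeq (p : List (Fin b) → Fin b) (n : ℕ) : Fin b := p (iterList p n)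

lemma iterList_eq_ofFn (p : List (Fin b) → Fin b) (n : ℕ) :
    iterList p n = List.ofFn (fun i : Fin n => iterSeq p i) := by
  induction n with
  | zero => simp [iterList]
  | succ n ih =>
      rw [iterList, ih, List.ofFn_succ']
      simp [List.concat_eq_append, iterSeq, ih]

lemma length_iterList (p : List (Fin b) → Fin b) (n : ℕ) :
    (iterList p n).length = n := by rw [iterList_eq_ofFn]; simp

/-- picker for greatest element -/
noncomputable def pickG (hb : 0 < b) (S : Set (ℕ → Fin b)) (L : List (Fin b)) : Fin b :=
  letI T : Finset (Fin b) := Finset.univ.filter fun j => (S ∩ W b (L ++ [j])).Nonempty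
  if h : T.Nonempty then T.max' h else ⟨0, hb⟩

lemma pickG_max (hb : 0 < b) {S : Set (ℕ → Fin b)} {L : List (Fin b)} {j : Fin b}
    (h : (S ∩ W b (L ++ [j])).Nonempty) : j ≤ pickG hb S L := by
  classical
  set T : Finset (Fin b) := Finset.univ.filter fun j => (S ∩ W b (L ++ [j])).Nonempty with hT
  have hjT : j ∈ T := by simp [hT, h]
  have hTne : T.Nonempty := ⟨j, hjT⟩
  rw [pickG]
  rw [dif_pos hTne]
  convert T.le_max' j hjT using 2

lemma pickG_nonempty (hb : 0 < b) {S : Set (ℕ → Fin b)} {L : List (Fin b)}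
    (h : (S ∩ W b L).Nonempty) : (S ∩ W b (L ++ [pickG hb S L])).Nonempty := by
  classical
  obtain ⟨x, hxS, hxW⟩ := h
  set T : Finset (Fin b) := Finset.univ.filter fun j => (S ∩ W b (L ++ [j])).Nonempty with hT
  have hx : x ∈ W b (L ++ [x L.length]) := mem_W_append.mpr ⟨hxW, rfl⟩
  have hmem : x L.length ∈ T := by
    simp only [hT, Finset.mem_filter, Finset.mem_univ, true_and]
    exact ⟨x, hxS, hx⟩
  have hTne : T.Nonempty := ⟨_, hmem⟩
  have hmem2 : pickG hb S L ∈ T := by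
    rw [pickG]; rw [dif_pos hTne]
    convert T.max'_mem hTne using 2
  rw [hT, Finset.mem_filter] at hmem2
  exact hmem2.2

lemma exists_greatestLex (hb : 0 < b) {S : Set (ℕ → Fin b)} (hne : S.Nonempty)
    (hcl : IsClosed S) : ∃ m, IsGreatestLex b S m := by
  classical
  set p := pickG hb S with hp
  set m : ℕ → Fin b := iterSeq p with hm
  have inv : ∀ n, (S ∩ W b (iterList p n)).Nonempty := by
    intro n
    induction n with
    | zero =>
        obtain ⟨x, hx⟩ := hne
        exact ⟨x, hx, fun i hi => absurd hi (by simp [iterList])⟩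
    | succ n ih => exact pickG_nonempty hb ih
  have hWm : ∀ n, ∀ x ∈ S ∩ W b (iterList p n), ∀ k < n, x k = m k := by
    intro n x hx k hk
    have := (mem_W_ofFn.mp (by rw [← iterList_eq_ofFn]; exact hx.2)) ⟨k, hk⟩
    simpa using this
  -- m ∈ S
  have hmS : m ∈ S := by
    have htend : Filter.Tendsto (fun n => (inv n).choose) Filter.atTop (nhds m) := by
      rw [tendsto_pi_nhds]
      intro k
      apply Filter.Tendsto.congr' _ tendsto_const_nhds
      filter_upwards [Filter.eventually_ge_atTop (k+1)] with n hn
      exact (hWm n _ (inv n).choose_spec k hn).symm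
    exact hcl.mem_of_tendsto htend
      (Filter.Eventually.of_forall fun n => (inv n).choose_spec.1)
  refine ⟨m, hmS, ?_⟩
  intro u hu
  by_cases huv : u = m
  · exact Or.inl huv
  have hex : ∃ n, u n ≠ m n := Function.ne_iff.mp huv
  set n := Nat.find hex with hn
  have hagree : ∀ k < n, u k = m k := fun k hk => not_not.mp (Nat.find_min hex hk)
  have huW : u ∈ W b (iterList p n) := by
    rw [iterList_eq_ofFn]
    exact mem_W_ofFn.mpr fun i => by simpa using hagree i i.isLt
  have hne2 : (S ∩ W b (iterList p n ++ [u n])).Nonempty := by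
    refine ⟨u, hu, mem_W_append.mpr ⟨huW, ?_⟩⟩
    rw [length_iterList]
  have hle : u n ≤ m n := pickG_max hb hne2
  exact Or.inr ⟨n, hagree, lt_of_le_of_ne hle (Nat.find_spec hex)⟩

end Aux

section Main
open Classical List
attribute [local instance] Classical.propDecidable
variable {b : ℕ} {U : List (Fin b) → Set (ℕ → Fin b)}

lemma child_subset (hUnion : ∀ s, U s = ⋃ i : Fin b, U (s ++ [i]))
    (s : List (Fin b)) (i : Fin b) : U (s ++ [i]) ⊆ U s := by
  rw [hUnion s]
  exact Set.subset_iUnion (fun i => U (s ++ [i])) i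

lemma mem_unique (hUnion : ∀ s, U s = ⋃ i : Fin b, U (s ++ [i]))
    (hDisj : ∀ s, ∀ i j : Fin b, i ≠ j → Disjoint (U (s ++ [i])) (U (s ++ [j]))) :
    ∀ {n : ℕ} {g h : Fin n → Fin b} {x : ℕ → Fin b},
      x ∈ U (List.ofFn g) → x ∈ U (List.ofFn h) → g = h := by
  intro n
  induction n with
  | zero => intro g h x _ _; funext i; exact absurd i.isLt (by omega)
  | succ n ih =>
      intro g h x hg hh
      have hg' : x ∈ U (List.ofFn (Fin.init g) ++ [g (Fin.last n)]) := by
        rw [← ofFn_snoc', Fin.snoc_init_self]; exact hg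
      have hh' : x ∈ U (List.ofFn (Fin.init h) ++ [h (Fin.last n)]) := by
        rw [← ofFn_snoc', Fin.snoc_init_self]; exact hh
      have hinit : Fin.init g = Fin.init h :=
        ih (child_subset hUnion _ _ hg') (child_subset hUnion _ _ hh')
      have hlast : g (Fin.last n) = h (Fin.last n) := by
        by_contra hne
        rw [hinit] at hg'
        exact Set.disjoint_left.mp (hDisj (List.ofFn (Fin.init h)) _ _ hne) hg' hh'
      funext i
      refine Fin.lastCases hlast (fun i => ?_) i
      have := congrFun hinit i
      simpa [Fin.init] using this
end Main

section Main2
open Classical List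
attribute [local instance] Classical.propDecidable
variable {b : ℕ}

noncomputable def pickB (hb : 0 < b) (U : List (Fin b) → Set (ℕ → Fin b))
    (x : ℕ → Fin b) (L : List (Fin b)) : Fin b :=
  if h : ∃ i : Fin b, x ∈ U (L ++ [i]) then h.choose else ⟨0, hb⟩

variable {U : List (Fin b) → Set (ℕ → Fin b)}

lemma branch_mem (hb : 0 < b) (hEmpty : U [] = Set.univ)
    (hUnion : ∀ s, U s = ⋃ i : Fin b, U (s ++ [i])) (x : ℕ → Fin b) :
    ∀ n, x ∈ U (iterList (pickB hb U x) n) := by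
  intro n
  induction n with
  | zero => rw [iterList, hEmpty]; trivial
  | succ n ih =>
      rw [iterList]
      have hex : ∃ i : Fin b, x ∈ U (iterList (pickB hb U x) n ++ [i]) := by
        have := (hUnion _) ▸ ih
        simpa using Set.mem_iUnion.mp this
      rw [pickB, dif_pos hex]
      exact hex.choose_spec

lemma branch_ofFn_mem (hb : 0 < b) (hEmpty : U [] = Set.univ)
    (hUnion : ∀ s, U s = ⋃ i : Fin b, U (s ++ [i])) (x : ℕ → Fin b) (n : ℕ) :
    x ∈ U (List.ofFn fun i : Fin n => iterSeq (pickB hb U x) i) := by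
  rw [← iterList_eq_ofFn]
  exact branch_mem hb hEmpty hUnion x n

lemma ofFn_restrict_succ (y : ℕ → Fin b) (n : ℕ) :
    (List.ofFn fun i : Fin (n+1) => y i) = (List.ofFn fun i : Fin n => y i) ++ [y n] := by
  rw [← ofFn_snoc']
  congr 1
  funext i
  refine Fin.lastCases ?_ (fun i => ?_) i
  · simp
  · simp

end Main2

/-- every filtering determines a unique branch map, which is a continuous
nondecreasing surjection of `b^ω`. -/
theorem filtering_branch_map (b : ℕ) (hb : 2 ≤ b)
    (U : List (Fin b) → Set (ℕ → Fin b)) (hU : Filtering b U) :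
    (∀ x : ℕ → Fin b, ∃! y : ℕ → Fin b,
        ∀ n : ℕ, x ∈ U (List.ofFn fun i : Fin n => y i)) ∧
    (∃ F : (ℕ → Fin b) → (ℕ → Fin b),
        (∀ x n, x ∈ U (List.ofFn fun i : Fin n => F x i)) ∧ CSur b F) := by
  classical
  obtain ⟨hS, hEmpty, hUnion, hDisj, hMax⟩ := hU
  have hb0 : 0 < b := by omega
  set F : (ℕ → Fin b) → (ℕ → Fin b) := fun x => iterSeq (pickB hb0 U x) with hF
  have hP : ∀ x n, x ∈ U (List.ofFn fun i : Fin n => F x i) := fun x n =>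
    branch_ofFn_mem hb0 hEmpty hUnion x n
  have huniq : ∀ x (y : ℕ → Fin b),
      (∀ n, x ∈ U (List.ofFn fun i : Fin n => y i)) → y = F x := by
    intro x y hy
    funext m
    have h1 := mem_unique hUnion hDisj (hy (m+1)) (hP x (m+1))
    have h2 := congrFun h1 (⟨m, Nat.lt_succ_self m⟩ : Fin (m+1))
    simpa using h2
  constructor
  · intro x
    exact ⟨F x, hP x, fun y hy => huniq x y hy⟩
  refine ⟨F, hP, ?_, ?_, ?_⟩
  · -- continuity
    apply continuous_pi
    intro n
    rw [continuous_discrete_rng]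
    intro j
    have heq : (fun x => F x n) ⁻¹' {j} =
        ⋃ (g : Fin (n+1) → Fin b) (_ : g (Fin.last n) = j), U (List.ofFn g) := by
      ext x
      simp only [Set.mem_preimage, Set.mem_singleton_iff, Set.mem_iUnion]
      constructor
      · intro h
        exact ⟨fun i : Fin (n+1) => F x i, by simpa using h, hP x (n+1)⟩
      · rintro ⟨g, hgj, hxg⟩
        have h1 := mem_unique hUnion hDisj (hP x (n+1)) hxg
        have h2 := congrFun h1 (Fin.last n)
        simp only [Fin.val_last] at h2
        rw [h2, hgj]
    rw [heq]
    exact isOpen_iUnion fun g => isOpen_iUnion fun _ => ((hS _).2.1).isOpen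
  · -- surjective
    intro y
    set C : ℕ → Set (ℕ → Fin b) := fun n => U (List.ofFn fun i : Fin n => y i) with hC
    have hsub : ∀ n, C (n+1) ⊆ C n := by
      intro n
      show U _ ⊆ U _
      rw [ofFn_restrict_succ]
      exact child_subset hUnion _ _
    have hnonempty : ∀ n, (C n).Nonempty := fun n => (hS _).1
    have hclosed : ∀ n, IsClosed (C n) := fun n => ((hS _).2.1).isClosed
    have hcpt : IsCompact (C 0) := by
      have h0 : C 0 = Set.univ := by
        show U _ = _
        simpa using hEmpty
      rw [h0]; exact isCompact_univ
    obtain ⟨x, hx⟩ := IsCompact.nonempty_iInter_of_sequence_nonempty_isCompact_isClosed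
      C hsub hnonempty hcpt hclosed
    exact ⟨x, (huniq x y (fun n => Set.mem_iInter.mp hx n)).symm⟩
  · -- nondecreasing
    intro x x' hxx
    by_cases hFe : F x = F x'
    · exact Or.inl hFe
    have hex : ∃ n, F x n ≠ F x' n := Function.ne_iff.mp hFe
    set n := Nat.find hex with hn
    have hagree : ∀ k < n, F x k = F x' k := fun k hk => not_not.mp (Nat.find_min hex hk)
    have hsEq : (List.ofFn fun i : Fin n => F x i) = (List.ofFn fun i : Fin n => F x' i) := by
      congr 1; funext i; exact hagree i i.isLt
    set s := List.ofFn fun i : Fin n => F x i with hs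
    have hxmem : x ∈ U (s ++ [F x n]) := by
      rw [hs, ← ofFn_restrict_succ]; exact hP x (n+1)
    have hx'mem : x' ∈ U (s ++ [F x' n]) := by
      rw [hsEq, ← ofFn_restrict_succ]; exact hP x' (n+1)
    rcases lt_or_gt_of_ne (Nat.find_spec hex) with hlt | hgt
    · exact Or.inr ⟨n, hagree, hlt⟩
    exfalso
    obtain ⟨Mi, hMi⟩ := exists_greatestLex hb0 (hS (s ++ [F x' n])).1
      ((hS (s ++ [F x' n])).2.1).isClosed
    obtain ⟨Mj, hMj⟩ := exists_greatestLex hb0 (hS (s ++ [F x n])).1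
      ((hS (s ++ [F x n])).2.1).isClosed
    have hMM : lexLT b Mi Mj := hMax s (F x' n) (F x n) hgt Mi Mj hMi hMj
    have h1 : lexLE b x Mi := lexLE_trans hxx (hMi.2 x' hx'mem)
    have h2 : Mi ∈ U (s ++ [F x n]) :=
      (hS (s ++ [F x n])).2.2 x hxmem Mj hMj.1 Mi h1 (Or.inr hMM)
    exact Set.disjoint_left.mp (hDisj s (F x' n) (F x n) hgt.ne) hMi.1 h2
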